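/- Let {X_i : i ≥ 1} be i.i.d. integrable real random variables and let {N_n : n ≥ 1} be positive-integer-valued random variables such that the sequence (N_n) is independent of {X_i : i ≥ 1} and N_n/n → c in probability for a constant c ∈ (0,1]. Then (1/n)∑_{i=1}^{N_n} X_i → c·E[X_1] in probability and (1/N_n)∑_{i=1}^{N_n} X_i → E[X_1] in probability as n → ∞. -/

import Mathlib

open MeasureTheory ProbabilityTheory Filter

noncomputable section

/-- Subsequence criterion for convergence in measure. -/
lemma tendstoInMeasure_of_subseq {Ω : Type} [MeasurableSpace Ω] (P : Measure Ω)
    [IsFiniteMeasure P] {f : ℕ → Ω → ℝ} {g : Ω → ℝ}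
    (hf : ∀ n, AEStronglyMeasurable (f n) P)
    (h : ∀ ns : ℕ → ℕ, Tendsto ns atTop atTop → ∃ ms : ℕ → ℕ,
      ∀ᵐ ω ∂P, Tendsto (fun k => f (ns (ms k)) ω) atTop (nhds (g ω))) :
    TendstoInMeasure P f atTop g := by
  intro ε hε
  apply tendsto_of_subseq_tendsto
  intro ns hns
  obtain ⟨ms, hae⟩ := h ns hns
  exact ⟨ms, tendstoInMeasure_of_tendsto_ae (fun k => hf _) hae ε hε⟩

/-- **Lemma (law of large numbers with a random number of terms).**
If `{X_i}` are i.i.d. integrable, `{N_n}` are positive-integer-valued random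
variables with `(N_n)` independent of `{X_i}` and `N_n/n → c ∈ (0,1]` in
probability, then `(1/n)∑_{i=1}^{N_n} X_i →p c·E[X_1]` and
`(1/N_n)∑_{i=1}^{N_n} X_i →p E[X_1]`. -/
theorem lln_random_index
    {Ω : Type} [MeasurableSpace Ω] (P : Measure Ω) [IsProbabilityMeasure P]
    (X : ℕ → Ω → ℝ) (hmeas : ∀ i, Measurable (X i))
    (hident : ∀ i, ProbabilityTheory.IdentDistrib (X i) (X 0) P P)
    (hindep : ProbabilityTheory.iIndepFun X P)
    (hint : Integrable (X 0) P)
    (N : ℕ → Ω → ℕ) (hmeasN : ∀ n, Measurable (N n)) (hNpos : ∀ n ω, 0 < N n ω)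
    (hNX : ProbabilityTheory.IndepFun
      (fun ω => fun n : ℕ => N n ω) (fun ω => fun i : ℕ => X i ω) P)
    (c : ℝ) (hc : c ∈ Set.Ioc (0 : ℝ) 1)
    (hN : TendstoInMeasure P (fun n ω => (N n ω : ℝ) / n) atTop (fun _ => c)) :
    TendstoInMeasure P
        (fun n ω => (∑ i ∈ Finset.range (N n ω), X i ω) / n) atTop
        (fun _ => c * ∫ ω, X 0 ω ∂P) ∧
      TendstoInMeasure P
        (fun n ω => (∑ i ∈ Finset.range (N n ω), X i ω) / (N n ω)) atTop
        (fun _ => ∫ ω, X 0 ω ∂P) := by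
  obtain ⟨hc0, hc1⟩ := hc
  set μ₀ : ℝ := ∫ ω, X 0 ω ∂P with hμ₀
  -- strong law of large numbers
  have hslln : ∀ᵐ ω ∂P, Tendsto (fun n : ℕ => (∑ i ∈ Finset.range n, X i ω) / n)
      atTop (nhds μ₀) :=
    strong_law_ae_real X hint (fun i j hij => hindep.indepFun hij) hident
  -- measurability of partial sums with random index
  have hSk : ∀ k : ℕ, Measurable fun ω => (∑ i ∈ Finset.range k, X i ω) :=
    fun k => Finset.measurable_sum _ fun i _ => hmeas i
  have hSN : ∀ n : ℕ, Measurable fun ω => (∑ i ∈ Finset.range (N n ω), X i ω) := by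
    intro n
    have h1 : Measurable fun p : Ω × ℕ => ∑ i ∈ Finset.range p.2, X i p.1 :=
      measurable_from_prod_countable_left fun k => hSk k
    exact h1.comp (measurable_id.prodMk (hmeasN n))
  -- P {N n < K} → 0
  have hNK : ∀ K : ℕ, Tendsto (fun n => P {ω | N n ω < K}) atTop (nhds 0) := by
    intro K
    apply tendsto_of_tendsto_of_tendsto_of_le_of_le' tendsto_const_nhds
      (tendstoInMeasure_iff_dist.mp hN (c / 2) (by positivity))
    · exact Eventually.of_forall fun n => zero_le
    · filter_upwards [eventually_ge_atTop (⌈2 * (K : ℝ) / c⌉₊ + 1)] with n hn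
      apply measure_mono
      intro ω hω
      have hn1 : (1 : ℕ) ≤ n := le_trans (Nat.le_add_left _ _) hn
      have hnpos : (0 : ℝ) < n := by exact_mod_cast hn1
      have hnc : 2 * (K : ℝ) / c ≤ n := by
        have : ⌈2 * (K : ℝ) / c⌉₊ ≤ n := le_trans (Nat.le_succ _) hn
        exact le_trans (Nat.le_ceil _) (by exact_mod_cast this)
      have h2K : 2 * (K : ℝ) ≤ c * n := by
        rw [div_le_iff₀ hc0] at hnc; linarith
      have hNn : (N n ω : ℝ) < K := by exact_mod_cast hω
      have hx : (N n ω : ℝ) / n ≤ c / 2 := by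
        have := (N n ω).cast_nonneg (α := ℝ)
        rw [div_le_iff₀ hnpos]; nlinarith
      show c / 2 ≤ dist ((N n ω : ℝ) / n) c
      have hxnn : (0 : ℝ) ≤ (N n ω : ℝ) / n := by positivity
      rw [Real.dist_eq, abs_of_nonpos (by linarith)]
      linarith
  -- second conclusion
  have h2 : TendstoInMeasure P
      (fun n ω => (∑ i ∈ Finset.range (N n ω), X i ω) / (N n ω)) atTop
      (fun _ => μ₀) := by
    rw [tendstoInMeasure_iff_dist]
    intro ε hε
    rw [ENNReal.tendsto_nhds_zero]
    intro δ hδ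
    set A : ℕ → Set Ω := fun K =>
      ⋃ k, ⋃ (_ : K ≤ k), {ω | ε ≤ dist ((∑ i ∈ Finset.range k, X i ω) / k) μ₀} with hA
    have hAmeas : ∀ K, MeasurableSet (A K) := by
      intro K
      refine MeasurableSet.iUnion fun k => MeasurableSet.iUnion fun _ => ?_
      exact measurableSet_le measurable_const
        (((hSk k).div_const _).dist measurable_const)
    have hAanti : Antitone A := by
      intro K L hKL
      intro ω hω
      simp only [hA, Set.mem_iUnion, Set.mem_setOf_eq] at hω ⊢
      obtain ⟨k, hk, h⟩ := hω
      exact ⟨k, hKL.trans hk, h⟩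
    have hAinter : P (⋂ K, A K) = 0 := by
      refine measure_mono_null ?_ (ae_iff.mp hslln)
      intro ω hω
      simp only [hA, Set.mem_iInter, Set.mem_iUnion, Set.mem_setOf_eq] at hω
      simp only [Set.mem_setOf_eq]
      intro hconv
      obtain ⟨M, hM⟩ := (Metric.tendsto_atTop.mp hconv) ε hε
      obtain ⟨k, hk, hk2⟩ := hω M
      exact absurd (hM k hk) (not_lt.mpr hk2)
    have hA0 : Tendsto (fun K => P (A K)) atTop (nhds 0) := by
      have := tendsto_measure_iInter_atTop (fun K => (hAmeas K).nullMeasurableSet)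
        hAanti ⟨0, measure_ne_top P _⟩
      rwa [hAinter] at this
    obtain ⟨K, hK⟩ := (ENNReal.tendsto_nhds_zero.mp hA0 (δ / 2)
      (ENNReal.half_pos hδ.ne')).exists
    filter_upwards [ENNReal.tendsto_nhds_zero.mp (hNK K) (δ / 2)
      (ENNReal.half_pos hδ.ne')] with n hn
    have hsub : {ω | ε ≤ dist ((∑ i ∈ Finset.range (N n ω), X i ω) / (N n ω : ℝ)) μ₀}
        ⊆ A K ∪ {ω | N n ω < K} := by
      intro ω hω
      by_cases h : N n ω < K
      · exact Or.inr h
      · exact Or.inl (Set.mem_iUnion₂.mpr ⟨N n ω, not_lt.mp h, hω⟩)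
    calc P {ω | ε ≤ dist ((∑ i ∈ Finset.range (N n ω), X i ω) / (N n ω : ℝ)) μ₀}
        ≤ P (A K ∪ {ω | N n ω < K}) := measure_mono hsub
      _ ≤ P (A K) + P {ω | N n ω < K} := measure_union_le _ _
      _ ≤ δ / 2 + δ / 2 := add_le_add hK hn
      _ = δ := ENNReal.add_halves δ
  refine ⟨?_, h2⟩
  -- first conclusion via subsequence principle
  apply tendstoInMeasure_of_subseq
  · exact fun n => ((hSN n).div_const _).aestronglyMeasurable
  · intro ns hns
    have h2' : TendstoInMeasure P
        (fun k ω => (∑ i ∈ Finset.range (N (ns k) ω), X i ω) / (N (ns k) ω)) atTop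
        (fun _ => μ₀) := fun ε hε => (h2 ε hε).comp hns
    obtain ⟨ms1, hms1, hae1⟩ := h2'.exists_seq_tendsto_ae
    have hN' : TendstoInMeasure P
        (fun k ω => (N (ns (ms1 k)) ω : ℝ) / (ns (ms1 k))) atTop (fun _ => c) :=
      fun ε hε => (hN ε hε).comp (hns.comp hms1.tendsto_atTop)
    obtain ⟨ms2, hms2, hae2⟩ := hN'.exists_seq_tendsto_ae
    refine ⟨ms1 ∘ ms2, ?_⟩
    filter_upwards [hae1, hae2] with ω hω1 hω2
    have hmul := (hω1.comp hms2.tendsto_atTop).mul hω2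
    rw [mul_comm] at hmul
    refine hmul.congr fun k => ?_
    set m := ns (ms1 (ms2 k))
    have hb : (N m ω : ℝ) ≠ 0 := by
      exact_mod_cast (hNpos m ω).ne'
    show (∑ i ∈ Finset.range (N m ω), X i ω) / (N m ω : ℝ) * ((N m ω : ℝ) / m)
        = (∑ i ∈ Finset.range (N m ω), X i ω) / m
    rw [div_mul_div_comm, mul_comm ((∑ i ∈ Finset.range (N m ω), X i ω)) ((N m ω : ℝ)),
      mul_div_mul_left _ _ hb]
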